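/- For λ a positive integer and m ≥ 0, the Boole polynomials of the second kind satisfy B̂l_m(x|λ) = ∑_{l=0}^{m} s(m,l) (-1)^l (λ^l/2) E_l(-x/λ). -/

import Mathlib

open Finset PowerSeries

/-- Stirling numbers of the second kind. -/
def stirling2 : ℕ → ℕ → ℕ
  | 0, 0 => 1
  | 0, _ + 1 => 0
  | _ + 1, 0 => 0
  | n + 1, k + 1 => (k + 1) * stirling2 n (k + 1) + stirling2 n k

/-- Unsigned Stirling numbers of the first kind. -/
def stirling1 : ℕ → ℕ → ℕ
  | 0, 0 => 1
  | 0, _ + 1 => 0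
  | _ + 1, 0 => 0
  | n + 1, k + 1 => n * stirling1 n (k + 1) + stirling1 n k

/-- Signed Stirling numbers of the first kind. -/
def s1 (n l : ℕ) : ℚ := (-1) ^ (n - l) * (stirling1 n l : ℚ)

/-- The exponential generating function `∑ a n * t^n / n!` as a power series over `ℚ`. -/
noncomputable def egf (a : ℕ → ℚ) : PowerSeries ℚ :=
  PowerSeries.mk fun n => a n / (Nat.factorial n : ℚ)

/-- The binomial series `(1+t)^x = ∑ (x)_n t^n / n!` for `x : ℚ`. -/
noncomputable def onePlusTPow (x : ℚ) : PowerSeries ℚ :=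
  egf fun n => ∏ i ∈ Finset.range n, (x - i)

/-- `e^{xt}` as a power series over `ℚ`. -/
noncomputable def expXT (x : ℚ) : PowerSeries ℚ := egf fun n => x ^ n

lemma stirling2_eq_zero : ∀ n k, n < k → stirling2 n k = 0
  | 0, _ + 1, _ => rfl
  | n + 1, k + 1, h => by
      rw [stirling2, stirling2_eq_zero n (k + 1) (by omega),
        stirling2_eq_zero n k (by omega)]
      ring

lemma stirling1_eq_zero : ∀ n k, n < k → stirling1 n k = 0
  | 0, _ + 1, _ => rfl
  | n + 1, k + 1, h => by
      rw [stirling1, stirling1_eq_zero n (k + 1) (by omega),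
        stirling1_eq_zero n k (by omega)]
      ring

lemma stirling2_self : ∀ n, stirling2 n n = 1
  | 0 => rfl
  | n + 1 => by
      rw [stirling2, stirling2_self n, stirling2_eq_zero n (n + 1) (by omega)]
      ring

lemma stirling1_self : ∀ n, stirling1 n n = 1
  | 0 => rfl
  | n + 1 => by
      rw [stirling1, stirling1_self n, stirling1_eq_zero n (n + 1) (by omega)]
      ring

lemma s1_self (n : ℕ) : s1 n n = 1 := by
  simp [s1, stirling1_self]

lemma s1_eq_zero {n l : ℕ} (h : n < l) : s1 n l = 0 := by
  simp [s1, stirling1_eq_zero n l h]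

lemma s1_zero_right (n : ℕ) : s1 (n + 1) 0 = 0 := by
  simp [s1, stirling1]

lemma s1_rec (n l : ℕ) : s1 (n + 1) (l + 1) = s1 n l - n * s1 n (l + 1) := by
  rcases lt_trichotomy l n with h | rfl | h
  · have h1 : n - l = (n - (l + 1)) + 1 := by omega
    have h2 : n + 1 - (l + 1) = n - l := by omega
    simp only [s1, stirling1, h2, h1]
    push_cast
    ring
  · simp [s1_self, s1_eq_zero (Nat.lt_succ_self l), s1, stirling1,
      stirling1_self, stirling1_eq_zero l (l + 1) (by omega)]
  · rw [s1_eq_zero (by omega), s1_eq_zero (by omega), s1_eq_zero (by omega)]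
    ring

lemma stirling2_cast (n k : ℕ) :
    (stirling2 (n + 1) (k + 1) : ℚ) = (k + 1) * stirling2 n (k + 1) + stirling2 n k := by
  rw [stirling2]; push_cast; ring

lemma N2 (c : ℚ) : ∀ k : ℕ, c ^ k =
    ∑ n ∈ range (k + 1), (stirling2 k n : ℚ) * ∏ i ∈ range n, (c - i) := by
  intro k
  induction k with
  | zero => simp [stirling2]
  | succ k ih =>
    have key : ∑ n ∈ range (k + 1), (n : ℚ) * stirling2 k n * ∏ i ∈ range n, (c - i)
        = ∑ n ∈ range (k + 1),
          ((n : ℚ) + 1) * stirling2 k (n + 1) * ∏ i ∈ range (n + 1), (c - i) := by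
      have h1 := Finset.sum_range_succ (fun n => (n : ℚ) * stirling2 k n * ∏ i ∈ range n, (c - i)) (k + 1)
      have h2 := Finset.sum_range_succ' (fun n => (n : ℚ) * stirling2 k n * ∏ i ∈ range n, (c - i)) (k + 1)
      rw [h1] at h2
      simp only [stirling2_eq_zero k (k + 1) (by omega)] at h2
      push_cast at h2 ⊢
      simp only [mul_zero, zero_mul, add_zero, Nat.cast_zero] at h2
      rw [h2]
    rw [pow_succ, ih, Finset.sum_mul]
    rw [Finset.sum_range_succ' (fun n => (stirling2 (k + 1) n : ℚ) * ∏ i ∈ range n, (c - i)) (k + 1)]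
    simp only [stirling2_cast]
    have h0 : (stirling2 (k + 1) 0 : ℚ) * ∏ i ∈ range 0, (c - i) = 0 := by
      simp [stirling2]
    rw [h0, add_zero]
    have expand : ∀ n ∈ range (k + 1),
        (stirling2 k n : ℚ) * (∏ i ∈ range n, (c - i)) * c
        = (stirling2 k n : ℚ) * (∏ i ∈ range (n + 1), (c - i))
          + (n : ℚ) * stirling2 k n * ∏ i ∈ range n, (c - i) := by
      intro n _
      rw [prod_range_succ]
      ring
    rw [Finset.sum_congr rfl expand, Finset.sum_add_distrib, key,
      ← Finset.sum_add_distrib]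
    apply Finset.sum_congr rfl
    intro n _
    ring

lemma n_mul_s1_zero (n : ℕ) : (n : ℚ) * s1 n 0 = 0 := by
  cases n with
  | zero => simp
  | succ n => rw [s1_zero_right]; ring

lemma N1 (c : ℚ) : ∀ n : ℕ, ∏ i ∈ range n, (c - i) = ∑ l ∈ range (n + 1), s1 n l * c ^ l := by
  intro n
  induction n with
  | zero => simp [s1, stirling1]
  | succ n ih =>
    have shift : ∑ l ∈ range (n + 1), (n : ℚ) * s1 n l * c ^ l
        = ∑ l ∈ range (n + 1), (n : ℚ) * s1 n (l + 1) * c ^ (l + 1) := by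
      have h1 := Finset.sum_range_succ (fun l => (n : ℚ) * s1 n l * c ^ l) (n + 1)
      have h2 := Finset.sum_range_succ' (fun l => (n : ℚ) * s1 n l * c ^ l) (n + 1)
      rw [h1] at h2
      simp only [s1_eq_zero (Nat.lt_succ_self n), pow_zero, mul_zero, zero_mul, add_zero,
        mul_one, n_mul_s1_zero] at h2
      rw [h2]
    rw [prod_range_succ, ih]
    rw [Finset.sum_range_succ' (fun l => s1 (n + 1) l * c ^ l) (n + 1)]
    simp only [s1_rec, s1_zero_right, pow_zero, mul_one, zero_mul, add_zero]
    have expand : ∀ l ∈ range (n + 1),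
        s1 n l * c ^ l * (c - n)
        = s1 n l * c ^ (l + 1) - (n : ℚ) * s1 n l * c ^ l := by
      intro l _; rw [pow_succ]; ring
    rw [Finset.sum_mul, Finset.sum_congr rfl expand, Finset.sum_sub_distrib, shift,
      ← Finset.sum_sub_distrib]
    apply Finset.sum_congr rfl
    intro l _
    ring

lemma N3 (c : ℚ) (k : ℕ) : c ^ k =
    ∑ l ∈ range (k + 1), (∑ n ∈ range (k + 1), (stirling2 k n : ℚ) * s1 n l) * c ^ l := by
  conv_lhs => rw [N2 c k]
  have step : ∀ n ∈ range (k + 1),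
      (stirling2 k n : ℚ) * ∏ i ∈ range n, (c - i)
      = ∑ l ∈ range (k + 1), (stirling2 k n : ℚ) * s1 n l * c ^ l := by
    intro n hn
    simp only [Finset.mem_range] at hn
    rw [N1, Finset.mul_sum]
    have sub : range (n + 1) ⊆ range (k + 1) := Finset.range_subset_range.2 (by omega)
    have hz : ∀ l ∈ range (k + 1), l ∉ range (n + 1) →
        (stirling2 k n : ℚ) * (s1 n l * c ^ l) = 0 := by
      intro l _ hl
      simp only [Finset.mem_range] at hl
      rw [s1_eq_zero (by omega)]
      ring
    rw [Finset.sum_subset sub hz]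
    exact Finset.sum_congr rfl fun l _ => by ring
  rw [Finset.sum_congr rfl step, Finset.sum_comm]
  exact Finset.sum_congr rfl fun l _ => by rw [Finset.sum_mul]

lemma OS (k l : ℕ) :
    ∑ n ∈ range (k + 1), (stirling2 k n : ℚ) * s1 n l = if l = k then 1 else 0 := by
  have hpq : (∑ j ∈ range (k + 1),
      Polynomial.C (∑ n ∈ range (k + 1), (stirling2 k n : ℚ) * s1 n j) * Polynomial.X ^ j)
      = (Polynomial.X : Polynomial ℚ) ^ k := by
    apply Polynomial.funext
    intro c
    rw [Polynomial.eval_finset_sum]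
    simp only [Polynomial.eval_mul, Polynomial.eval_C, Polynomial.eval_pow, Polynomial.eval_X]
    exact (N3 c k).symm
  have := congrArg (fun p => Polynomial.coeff p l) hpq
  simp only [Polynomial.finset_sum_coeff, Polynomial.coeff_C_mul, Polynomial.coeff_X_pow] at this
  rw [Finset.sum_congr rfl (fun j _ => by rw [mul_ite, mul_one, mul_zero]),
    Finset.sum_ite_eq (range (k + 1)) l] at this
  by_cases hl : l ∈ range (k + 1)
  · rw [if_pos hl] at this
    rw [this]
  · rw [if_neg hl] at this
    simp at hl
    rw [← this]
    have : ∀ n ∈ range (k + 1), (stirling2 k n : ℚ) * s1 n l = 0 := by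
      intro n hn
      simp at hn
      rw [s1_eq_zero (by omega)]
      ring
    rw [Finset.sum_congr rfl this]
    simp

lemma INV (u v : ℕ → ℚ)
    (h : ∀ n, v n = ∑ k ∈ range (n + 1), (stirling2 n k : ℚ) * u k) :
    ∀ m, u m = ∑ l ∈ range (m + 1), s1 m l * v l := by
  intro m
  induction m using Nat.strong_induction_on with
  | _ m ih =>
    have hm := h m
    rw [Finset.sum_range_succ, stirling2_self, Nat.cast_one, one_mul] at hm
    have step : ∀ k ∈ range m, (stirling2 m k : ℚ) * u k
        = ∑ l ∈ range m, (stirling2 m k : ℚ) * (s1 k l * v l) := by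
      intro k hk
      simp only [Finset.mem_range] at hk
      rw [ih k hk, Finset.mul_sum]
      apply Finset.sum_subset (Finset.range_subset_range.2 (by omega))
      intro l _ hl
      simp only [Finset.mem_range] at hl
      rw [s1_eq_zero (by omega)]
      ring
    have inner : ∀ l ∈ range m,
        ∑ k ∈ range m, (stirling2 m k : ℚ) * (s1 k l * v l) = -(s1 m l * v l) := by
      intro l hl
      simp only [Finset.mem_range] at hl
      have h1 := OS m l
      rw [Finset.sum_range_succ, stirling2_self, Nat.cast_one, one_mul,
        if_neg (by omega)] at h1
      have h2 : ∑ k ∈ range m, (stirling2 m k : ℚ) * s1 k l = -s1 m l := by linarith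
      calc ∑ k ∈ range m, (stirling2 m k : ℚ) * (s1 k l * v l)
          = (∑ k ∈ range m, (stirling2 m k : ℚ) * s1 k l) * v l := by
            rw [Finset.sum_mul]; exact Finset.sum_congr rfl fun k _ => by ring
        _ = -(s1 m l * v l) := by rw [h2]; ring
    have key : ∑ k ∈ range m, (stirling2 m k : ℚ) * u k
        = -∑ l ∈ range m, s1 m l * v l := by
      rw [Finset.sum_congr rfl step, Finset.sum_comm, Finset.sum_congr rfl inner]
      simp
    rw [key] at hm
    rw [Finset.sum_range_succ, s1_self, one_mul]
    linarith

lemma LN : ∀ n d : ℕ, ∑ k ∈ range (n + 1), n.choose k * stirling2 k d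
    = stirling2 (n + 1) (d + 1) := by
  intro n
  induction n with
  | zero => intro d; simp [stirling2]
  | succ n ih =>
    intro d
    rw [Finset.sum_range_succ' (fun k => (n + 1).choose k * stirling2 k d) (n + 1)]
    have pascal : ∀ k, (n + 1).choose (k + 1) = n.choose k + n.choose (k + 1) :=
      fun k => Nat.choose_succ_succ n k
    simp only [pascal, Nat.choose_zero_right, one_mul, add_mul]
    rw [Finset.sum_add_distrib]
    have h2 : ∑ k ∈ range (n + 1), n.choose (k + 1) * stirling2 (k + 1) d + stirling2 0 d
        = stirling2 (n + 1) (d + 1) := by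
      have := Finset.sum_range_succ' (fun k => n.choose k * stirling2 k d) (n + 1)
      rw [Finset.sum_range_succ, Nat.choose_succ_self, zero_mul, add_zero, ih d] at this
      simp only [Nat.choose_zero_right, one_mul] at this
      exact this.symm
    cases d with
    | zero =>
      have hz : ∀ k ∈ range (n + 1), n.choose k * stirling2 (k + 1) 0 = 0 := by
        intro k _; simp [stirling2]
      rw [Finset.sum_congr rfl hz]
      simp only [Finset.sum_const_zero, zero_add]
      rw [h2]
      show stirling2 (n + 1) 1 = stirling2 (n + 2) 1
      show stirling2 (n + 1) 1 = 1 * stirling2 (n + 1) 1 + stirling2 (n + 1) 0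
      simp [stirling2]
    | succ e =>
      have hrec : ∀ k ∈ range (n + 1), n.choose k * stirling2 (k + 1) (e + 1)
          = (e + 1) * (n.choose k * stirling2 k (e + 1)) + n.choose k * stirling2 k e := by
        intro k _
        show n.choose k * ((e + 1) * stirling2 k (e + 1) + stirling2 k e) = _
        ring
      rw [Finset.sum_congr rfl hrec, Finset.sum_add_distrib, ← Finset.mul_sum, ih (e + 1), ih e]
      rw [add_assoc, h2]
      conv_rhs => rw [stirling2]
      ring

noncomputable def K (n m : ℕ) : ℚ := (m.factorial : ℚ) * (stirling2 n m : ℚ) / (n.factorial : ℚ)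

lemma K_eq_zero {n m : ℕ} (h : n < m) : K n m = 0 := by
  simp [K, stirling2_eq_zero n m h]

lemma coeff_exp_sub_one (n : ℕ) :
    (PowerSeries.coeff n) (PowerSeries.exp ℚ - 1) = if n = 0 then 0 else 1 / (n.factorial : ℚ) := by
  rw [map_sub, PowerSeries.coeff_exp]
  cases n with
  | zero => simp
  | succ n => simp [PowerSeries.coeff_one]

lemma expSubOnePow : ∀ d : ℕ, (PowerSeries.exp ℚ - 1) ^ d = PowerSeries.mk (fun n => K n d) := by
  intro d
  induction d with
  | zero =>
    ext n
    rw [pow_zero, PowerSeries.coeff_one, PowerSeries.coeff_mk]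
    cases n with
    | zero => simp [K, stirling2]
    | succ n => simp [K, stirling2]
  | succ d ih =>
    ext n
    rw [pow_succ, ih, PowerSeries.coeff_mul, Finset.Nat.sum_antidiagonal_eq_sum_range_succ_mk]
    simp only [PowerSeries.coeff_mk, coeff_exp_sub_one]
    rw [Finset.sum_range_succ]
    simp only [Nat.sub_self, ↓reduceIte, mul_zero, add_zero]
    have hterm : ∀ k ∈ range n, K k d * (if n - k = 0 then 0 else 1 / ((n - k).factorial : ℚ))
        = (n.choose k * (stirling2 k d : ℚ) * d.factorial) / n.factorial := by
      intro k hk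
      simp only [Finset.mem_range] at hk
      rw [if_neg (by omega)]
      have hfac : (n.factorial : ℚ) = n.choose k * k.factorial * (n - k).factorial := by
        rw_mod_cast [Nat.choose_mul_factorial_mul_factorial (le_of_lt hk)]
      rw [K, hfac]
      have h1 : (k.factorial : ℚ) ≠ 0 := by exact_mod_cast k.factorial_ne_zero
      have h2 : ((n - k).factorial : ℚ) ≠ 0 := by exact_mod_cast (n - k).factorial_ne_zero
      have h3 : (n.choose k : ℚ) ≠ 0 := by
        exact_mod_cast Nat.ne_of_gt (Nat.choose_pos (le_of_lt hk))
      field_simp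
    rw [Finset.sum_congr rfl hterm, ← Finset.sum_div]
    have hLN : ∑ k ∈ range n, n.choose k * stirling2 k d = (d + 1) * stirling2 n (d + 1) := by
      have h := LN n d
      rw [Finset.sum_range_succ, Nat.choose_self, one_mul] at h
      have : stirling2 (n + 1) (d + 1) = (d + 1) * stirling2 n (d + 1) + stirling2 n d := rfl
      omega
    have : ∑ k ∈ range n, (n.choose k : ℚ) * (stirling2 k d : ℚ) * d.factorial
        = (∑ k ∈ range n, (n.choose k * stirling2 k d : ℕ) : ℚ) * d.factorial := by
      push_cast
      rw [Finset.sum_mul]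
    rw [this, ← Nat.cast_sum, hLN]
    simp only [K]
    push_cast [Nat.factorial_succ]
    ring

lemma keyPQ (p q n : ℕ) :
    ∑ k ∈ range (n + 1), K k p * K (n - k) q = K n (p + q) := by
  have h := congrArg (PowerSeries.coeff n) (pow_add (PowerSeries.exp ℚ - 1) p q)
  rw [expSubOnePow (p + q), expSubOnePow p, expSubOnePow q, PowerSeries.coeff_mk,
    PowerSeries.coeff_mul, Finset.Nat.sum_antidiagonal_eq_sum_range_succ_mk] at h
  simp only [PowerSeries.coeff_mk] at h
  exact h.symm

lemma tri {M : Type*} [AddCommMonoid M] (n : ℕ) (F : ℕ → ℕ → M) :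
    ∑ m ∈ range (n + 1), ∑ p ∈ range (m + 1), F p (m - p)
      = ∑ p ∈ range (n + 1), ∑ q ∈ range (n + 1 - p), F p q := by
  induction n with
  | zero => simp
  | succ n ih =>
    rw [Finset.sum_range_succ, ih]
    rw [Finset.sum_range_succ (fun p => ∑ q ∈ range (n + 2 - p), F p q) (n + 1)]
    have : n + 2 - (n + 1) = 1 := by omega
    rw [this]
    have split : ∀ p ∈ range (n + 1), ∑ q ∈ range (n + 2 - p), F p q
        = ∑ q ∈ range (n + 1 - p), F p q + F p (n + 1 - p) := by
      intro p hp
      simp only [Finset.mem_range] at hp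
      have : n + 2 - p = (n + 1 - p) + 1 := by omega
      rw [this, Finset.sum_range_succ]
    rw [Finset.sum_congr rfl split, Finset.sum_add_distrib]
    rw [Finset.sum_range_succ (fun p => F p (n + 1 - p)) (n + 1)]
    simp only [Nat.sub_self, Finset.sum_range_one]
    abel

noncomputable def SubFun (f : PowerSeries ℚ) : PowerSeries ℚ :=
  PowerSeries.mk fun n => ∑ m ∈ range (n + 1), (PowerSeries.coeff m f) * K n m

lemma SubFun_mul (f g : PowerSeries ℚ) : SubFun (f * g) = SubFun f * SubFun g := by
  ext n
  rw [SubFun, SubFun, SubFun, PowerSeries.coeff_mk, PowerSeries.coeff_mul,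
    Finset.Nat.sum_antidiagonal_eq_sum_range_succ_mk]
  simp only [PowerSeries.coeff_mk, PowerSeries.coeff_mul,
    Finset.Nat.sum_antidiagonal_eq_sum_range_succ_mk]
  -- LHS : ∑ m ∈ range (n+1), (∑ p ∈ range (m+1), f_p * g_(m-p)) * K n m
  -- RHS : ∑ a ∈ range (n+1), (∑ p ∈ range (a+1), f_p K a p) * (∑ q ∈ range (n-a+1), g_q K (n-a) q)
  have lhs_eq : ∑ m ∈ range (n + 1),
        (∑ p ∈ range (m + 1), (PowerSeries.coeff p f) * (PowerSeries.coeff (m - p) g)) * K n m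
      = ∑ p ∈ range (n + 1), ∑ q ∈ range (n + 1),
          (PowerSeries.coeff p f) * (PowerSeries.coeff q g) * K n (p + q) := by
    have h1 : ∀ m ∈ range (n + 1),
        (∑ p ∈ range (m + 1), (PowerSeries.coeff p f) * (PowerSeries.coeff (m - p) g)) * K n m
        = ∑ p ∈ range (m + 1),
            (PowerSeries.coeff p f) * (PowerSeries.coeff (m - p) g) * K n (p + (m - p)) := by
      intro m _
      rw [Finset.sum_mul]
      apply Finset.sum_congr rfl
      intro p hp
      simp only [Finset.mem_range] at hp
      have : p + (m - p) = m := by omega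
      rw [this]
    rw [Finset.sum_congr rfl h1,
      tri n (fun p q => (PowerSeries.coeff p f) * (PowerSeries.coeff q g) * K n (p + q))]
    apply Finset.sum_congr rfl
    intro p hp
    simp only [Finset.mem_range] at hp
    apply Finset.sum_subset (Finset.range_subset_range.2 (by omega))
    intro q _ hq
    simp only [Finset.mem_range] at hq
    rw [K_eq_zero (by omega), mul_zero]
  rw [lhs_eq]
  have rhs_eq : ∀ a ∈ range (n + 1),
      (∑ p ∈ range (a + 1), (PowerSeries.coeff p f) * K a p)
        * (∑ q ∈ range (n - a + 1), (PowerSeries.coeff q g) * K (n - a) q)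
      = ∑ p ∈ range (n + 1), ∑ q ∈ range (n + 1),
          (PowerSeries.coeff p f) * (PowerSeries.coeff q g) * (K a p * K (n - a) q) := by
    intro a ha
    simp only [Finset.mem_range] at ha
    have ef : ∑ p ∈ range (a + 1), (PowerSeries.coeff p f) * K a p
        = ∑ p ∈ range (n + 1), (PowerSeries.coeff p f) * K a p := by
      apply Finset.sum_subset (Finset.range_subset_range.2 (by omega))
      intro p _ hp
      simp only [Finset.mem_range] at hp
      rw [K_eq_zero (by omega), mul_zero]
    have eg : ∑ q ∈ range (n - a + 1), (PowerSeries.coeff q g) * K (n - a) q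
        = ∑ q ∈ range (n + 1), (PowerSeries.coeff q g) * K (n - a) q := by
      apply Finset.sum_subset (Finset.range_subset_range.2 (by omega))
      intro q _ hq
      simp only [Finset.mem_range] at hq
      rw [K_eq_zero (by omega), mul_zero]
    rw [ef, eg, Finset.sum_mul_sum]
    apply Finset.sum_congr rfl; intro p _
    apply Finset.sum_congr rfl; intro q _
    ring
  rw [Finset.sum_congr rfl rhs_eq]
  have final : ∑ a ∈ range (n + 1), ∑ p ∈ range (n + 1), ∑ q ∈ range (n + 1),
        (PowerSeries.coeff p f) * (PowerSeries.coeff q g) * (K a p * K (n - a) q)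
      = ∑ p ∈ range (n + 1), ∑ q ∈ range (n + 1),
          (PowerSeries.coeff p f) * (PowerSeries.coeff q g) * K n (p + q) := by
    rw [Finset.sum_comm]
    apply Finset.sum_congr rfl
    intro p _
    rw [Finset.sum_comm]
    apply Finset.sum_congr rfl
    intro q _
    rw [← Finset.mul_sum, keyPQ p q n]
  exact final.symm

lemma K_zero_right (n : ℕ) : K n 0 = if n = 0 then 1 else 0 := by
  cases n with
  | zero => simp [K, stirling2]
  | succ n => simp [K, stirling2]

noncomputable def SubE : PowerSeries ℚ →+* PowerSeries ℚ where
  toFun := SubFun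
  map_one' := by
    ext n
    rw [SubFun, PowerSeries.coeff_mk]
    simp only [PowerSeries.coeff_one]
    rw [Finset.sum_eq_single 0]
    · rw [if_pos rfl, one_mul, K_zero_right]
    · intro m _ hm
      rw [if_neg hm, zero_mul]
    · intro h
      simp at h
  map_mul' := SubFun_mul
  map_zero' := by
    ext n
    show (PowerSeries.coeff n) (SubFun 0) = _
    rw [SubFun, PowerSeries.coeff_mk]
    simp
  map_add' := by
    intro f g
    ext n
    show (PowerSeries.coeff n) (SubFun (f + g))
      = (PowerSeries.coeff n) (SubFun f + SubFun g)
    rw [SubFun, PowerSeries.coeff_mk, map_add, SubFun, SubFun, PowerSeries.coeff_mk,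
      PowerSeries.coeff_mk, ← Finset.sum_add_distrib]
    apply Finset.sum_congr rfl
    intro m _
    rw [map_add, add_mul]

lemma stirling2_one (n : ℕ) : stirling2 (n + 1) 1 = 1 := by
  induction n with
  | zero => rfl
  | succ n ih =>
    show 1 * stirling2 (n + 1) 1 + 0 = 1
    rw [ih]

lemma SubE_X : SubE PowerSeries.X = PowerSeries.exp ℚ - 1 := by
  ext n
  show (PowerSeries.coeff n) (SubFun PowerSeries.X) = _
  rw [SubFun, PowerSeries.coeff_mk, coeff_exp_sub_one]
  cases n with
  | zero => simp [PowerSeries.coeff_X]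
  | succ n =>
    rw [Finset.sum_eq_single 1]
    · rw [PowerSeries.coeff_X, if_pos rfl, one_mul, if_neg (Nat.succ_ne_zero n), K,
        stirling2_one]
      simp
    · intro m _ hm
      rw [PowerSeries.coeff_X, if_neg hm, zero_mul]
    · intro h
      simp at h

lemma coeff_egf (a : ℕ → ℚ) (n : ℕ) :
    PowerSeries.coeff n (egf a) = a n / (n.factorial : ℚ) := PowerSeries.coeff_mk n _

lemma SubE_egf (a : ℕ → ℚ) : SubE (egf a)
    = egf (fun n => ∑ m ∈ range (n + 1), (stirling2 n m : ℚ) * a m) := by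
  ext n
  show (PowerSeries.coeff n) (SubFun (egf a)) = _
  rw [SubFun, PowerSeries.coeff_mk, coeff_egf, Finset.sum_div]
  apply Finset.sum_congr rfl
  intro k _
  rw [coeff_egf, K]
  have h1 : (k.factorial : ℚ) ≠ 0 := by exact_mod_cast k.factorial_ne_zero
  have h2 : (n.factorial : ℚ) ≠ 0 := by exact_mod_cast n.factorial_ne_zero
  field_simp

lemma SubE_onePlusTPow (c : ℚ) : SubE (onePlusTPow c) = expXT c := by
  ext n
  show (PowerSeries.coeff n) (SubFun (onePlusTPow c)) = _
  rw [SubFun, PowerSeries.coeff_mk, expXT, coeff_egf]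
  have hterm : ∀ k ∈ range (n + 1),
      (PowerSeries.coeff k) (onePlusTPow c) * K n k
      = (stirling2 n k : ℚ) * (∏ i ∈ range k, (c - i)) / (n.factorial : ℚ) := by
    intro k _
    rw [onePlusTPow, coeff_egf, K]
    have h1 : (k.factorial : ℚ) ≠ 0 := by exact_mod_cast k.factorial_ne_zero
    have h2 : (n.factorial : ℚ) ≠ 0 := by exact_mod_cast n.factorial_ne_zero
    field_simp
  rw [Finset.sum_congr rfl hterm, ← Finset.sum_div, ← N2 c n]

lemma expXT_eq_rescale (c : ℚ) : expXT c = PowerSeries.rescale c (PowerSeries.exp ℚ) := by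
  ext n
  rw [PowerSeries.coeff_rescale, PowerSeries.coeff_exp, expXT, coeff_egf]
  simp [div_eq_mul_inv]

lemma exp_pow (L : ℕ) : (PowerSeries.exp ℚ) ^ L = expXT (L : ℚ) := by
  rw [PowerSeries.exp_pow_eq_rescale_exp, ← expXT_eq_rescale]

lemma rescale_egf (c : ℚ) (a : ℕ → ℚ) :
    PowerSeries.rescale c (egf a) = egf (fun n => c ^ n * a n) := by
  ext n
  rw [PowerSeries.coeff_rescale, coeff_egf, coeff_egf, mul_div_assoc]

lemma rescale_expXT (c y : ℚ) :
    PowerSeries.rescale c (expXT y) = expXT (c * y) := by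
  rw [expXT, rescale_egf]
  show egf (fun n => c ^ n * y ^ n) = expXT (c * y)
  rw [show (fun n : ℕ => c ^ n * y ^ n) = fun n : ℕ => (c * y) ^ n from
    funext fun n => (mul_pow c y n).symm]
  rfl

lemma expXT_mul (a b : ℚ) : expXT a * expXT b = expXT (a + b) := by
  rw [expXT_eq_rescale, expXT_eq_rescale, expXT_eq_rescale,
    PowerSeries.exp_mul_exp_eq_exp_add]

lemma expXT_zero : expXT (0 : ℚ) = 1 := by
  rw [expXT_eq_rescale, PowerSeries.rescale_zero]
  simp

lemma constantCoeff_expXT (c : ℚ) : PowerSeries.constantCoeff (R := ℚ) (expXT c) = 1 := by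
  rw [expXT, egf]
  simp [← PowerSeries.coeff_zero_eq_constantCoeff]

lemma onePlus_ne (c : ℚ) : (1 : PowerSeries ℚ) + expXT c ≠ 0 := by
  intro h
  have := congrArg (PowerSeries.constantCoeff (R := ℚ)) h
  rw [map_add, map_one, constantCoeff_expXT, map_zero] at this
  norm_num at this

theorem boole2nd_eq_sum_stirling1_euler (L : ℕ) (hL : 0 < L) (x : ℚ)
    (Bh : ℕ → ℚ) (E : ℕ → ℚ → ℚ)
    (hBh : egf Bh * (1 + (1 + PowerSeries.X) ^ L) = onePlusTPow ((L : ℚ) + x))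
    (hE : ∀ y : ℚ, egf (fun m => E m y) * (PowerSeries.exp ℚ + 1) = 2 * expXT y)
    (m : ℕ) :
    Bh m = ∑ l ∈ Finset.range (m + 1),
      s1 m l * (-1) ^ l * ((L : ℚ) ^ l / 2) * E l (-x / L) := by
  have hLne : (L : ℚ) ≠ 0 := Nat.cast_ne_zero.2 hL.ne'
  -- the transformed Boole equation
  have hb_eq : egf (fun n => ∑ k ∈ range (n + 1), (stirling2 n k : ℚ) * Bh k)
      * (1 + expXT (L : ℚ)) = expXT ((L : ℚ) + x) := by
    have H := congrArg SubE hBh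
    rw [map_mul, map_add, map_one, map_pow, map_add, map_one, SubE_X, SubE_egf,
      SubE_onePlusTPow] at H
    have h1 : (1 : PowerSeries ℚ) + (PowerSeries.exp ℚ - 1) = PowerSeries.exp ℚ := by ring
    rw [h1, exp_pow] at H
    exact H
  -- the transformed Euler equation
  have hEy := hE (-x / L)
  have h2 := congrArg (PowerSeries.rescale (-(L : ℚ))) hEy
  rw [map_mul, map_add, map_one, map_mul, map_ofNat, rescale_egf, rescale_expXT,
    ← expXT_eq_rescale] at h2
  have hxy : (-(L : ℚ)) * (-x / L) = x := by field_simp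
  rw [hxy] at h2
  have h4 : (expXT (-(L : ℚ)) + 1) * expXT (L : ℚ) = 1 + expXT (L : ℚ) := by
    rw [add_mul, one_mul, expXT_mul]
    norm_num [expXT_zero]
  have h3 : egf (fun l => (-(L : ℚ)) ^ l * E l (-x / L)) * (1 + expXT (L : ℚ))
      = 2 * expXT ((L : ℚ) + x) := by
    calc egf (fun l => (-(L : ℚ)) ^ l * E l (-x / L)) * (1 + expXT (L : ℚ))
        = egf (fun l => (-(L : ℚ)) ^ l * E l (-x / L))
            * ((expXT (-(L : ℚ)) + 1) * expXT (L : ℚ)) := by rw [h4]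
      _ = (egf (fun l => (-(L : ℚ)) ^ l * E l (-x / L)) * (expXT (-(L : ℚ)) + 1))
            * expXT (L : ℚ) := by ring
      _ = (2 * expXT x) * expXT (L : ℚ) := by rw [h2]
      _ = 2 * expXT ((L : ℚ) + x) := by rw [mul_assoc, expXT_mul, add_comm x (L : ℚ)]
  -- cancellation
  have hkey : (PowerSeries.C (R := ℚ) 2) * egf (fun n => ∑ k ∈ range (n + 1), (stirling2 n k : ℚ) * Bh k)
      = egf (fun l => (-(L : ℚ)) ^ l * E l (-x / L)) := by
    apply mul_right_cancel₀ (onePlus_ne (L : ℚ))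
    rw [h3, mul_assoc, hb_eq]
    rw [show (PowerSeries.C (R := ℚ) 2) = (2 : PowerSeries ℚ) from map_ofNat (PowerSeries.C (R := ℚ)) 2]
  have hcoeff : ∀ n : ℕ, ∑ k ∈ range (n + 1), (stirling2 n k : ℚ) * Bh k
      = (-(L : ℚ)) ^ n * E n (-x / L) / 2 := by
    intro n
    have := congrArg (PowerSeries.coeff n) hkey
    rw [PowerSeries.coeff_C_mul, coeff_egf, coeff_egf] at this
    have hfac : (n.factorial : ℚ) ≠ 0 := by exact_mod_cast n.factorial_ne_zero
    field_simp at this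
    rw [neg_div]
    linarith
  -- Stirling inversion
  have main := INV Bh (fun n => ∑ k ∈ range (n + 1), (stirling2 n k : ℚ) * Bh k)
    (fun n => rfl) m
  rw [main]
  apply Finset.sum_congr rfl
  intro l _
  rw [hcoeff l, neg_pow]
  ring
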